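/- Let τ > 0, σ > 1, and f(x) = τ x^σ ln x for x > 0. Then for every integer p ≥ 2, (τ p^{σ−1}/2^{σ−1}) · ln(e p^σ / 2^σ) ≤ f(p) − f(p−1) ≤ τ p^{σ−1} · ln(e p^σ). -/

import Mathlib

/-- Mean-value bounds for f(x) = τ x^σ ln x: for integers p ≥ 2,
    (τ p^{σ−1}/2^{σ−1})·ln(e p^σ/2^σ) ≤ f(p) − f(p−1) ≤ τ p^{σ−1}·ln(e p^σ). -/
theorem stmt_11 (τ σ : ℝ) (hτ : 0 < τ) (hσ : 1 < σ) (f : ℝ → ℝ)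
    (hf : ∀ x : ℝ, 0 < x → f x = τ * x ^ σ * Real.log x) :
    ∀ p : ℕ, 2 ≤ p →
      τ * (p : ℝ) ^ (σ - 1) / (2 : ℝ) ^ (σ - 1) *
          Real.log (Real.exp 1 * (p : ℝ) ^ σ / (2 : ℝ) ^ σ) ≤ f p - f ((p : ℝ) - 1) ∧
      f p - f ((p : ℝ) - 1) ≤ τ * (p : ℝ) ^ (σ - 1) * Real.log (Real.exp 1 * (p : ℝ) ^ σ) := by
  intro p hp
  have hp2 : (2:ℝ) ≤ (p:ℝ) := by exact_mod_cast hp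
  have hp1 : (1:ℝ) ≤ (p:ℝ) - 1 := by linarith
  have hppos : (0:ℝ) < p := by linarith
  have hab : (p:ℝ) - 1 < p := by linarith
  set φ : ℝ → ℝ := fun x => τ * x ^ (σ - 1) * (σ * Real.log x + 1) with hφ
  -- derivative on the open interval
  have hderiv : ∀ x ∈ Set.Ioo ((p:ℝ)-1) (p:ℝ), HasDerivAt f (φ x) x := by
    intro x hx
    have hx0 : 0 < x := by have := hx.1; linarith
    have hg : HasDerivAt (fun x : ℝ => τ * (x ^ σ * Real.log x))
        (τ * (σ * x ^ (σ - 1) * Real.log x + x ^ σ * x⁻¹)) x := by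
      exact ((Real.hasDerivAt_rpow_const (Or.inl hx0.ne')).mul
        (Real.hasDerivAt_log hx0.ne')).const_mul τ
    have heq : (fun x : ℝ => τ * (x ^ σ * Real.log x)) =ᶠ[nhds x] f := by
      filter_upwards [eventually_gt_nhds hx0] with y hy
      rw [hf y hy]; ring
    have hpow : x ^ σ * x⁻¹ = x ^ (σ - 1) := by
      rw [Real.rpow_sub hx0, Real.rpow_one, div_eq_mul_inv]
    have := hg.congr_of_eventuallyEq heq.symm
    refine this.congr_deriv ?_
    rw [hφ]; simp only []
    rw [← hpow]; ring
  have hcont : ContinuousOn f (Set.Icc ((p:ℝ)-1) p) := by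
    apply ContinuousOn.congr (f := fun x : ℝ => τ * (x ^ σ * Real.log x))
    · intro x hx
      have hx0 : 0 < x := lt_of_lt_of_le (by linarith) hx.1
      exact (continuousAt_const.mul ((Real.continuousAt_rpow_const x σ
        (Or.inl hx0.ne')).mul (Real.continuousAt_log hx0.ne'))).continuousWithinAt
    · intro x hx
      have hx0 : 0 < x := lt_of_lt_of_le (by linarith) hx.1
      rw [hf x hx0]; ring
  obtain ⟨c, hc, hceq⟩ := exists_hasDerivAt_eq_slope f φ hab hcont hderiv
  have hcval : f p - f ((p:ℝ) - 1) = φ c := by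
    rw [hceq]; field_simp; ring
  -- monotonicity of φ on [1, ∞)
  have mono : ∀ x y : ℝ, 1 ≤ x → x ≤ y → φ x ≤ φ y := by
    intro x y hx hxy
    have hx0 : (0:ℝ) < x := by linarith
    have hy1 : (1:ℝ) ≤ y := le_trans hx hxy
    have h1 : x ^ (σ - 1) ≤ y ^ (σ - 1) :=
      Real.rpow_le_rpow (by linarith) hxy (by linarith)
    have hlx : 0 ≤ Real.log x := Real.log_nonneg hx
    have hly : Real.log x ≤ Real.log y := Real.log_le_log hx0 hxy
    have h2 : σ * Real.log x + 1 ≤ σ * Real.log y + 1 := by nlinarith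
    have hxp : 0 ≤ x ^ (σ - 1) := Real.rpow_nonneg (by linarith) _
    have hyp : 0 ≤ y ^ (σ - 1) := Real.rpow_nonneg (by linarith) _
    have := mul_le_mul h1 h2 (by nlinarith) hyp
    rw [hφ]; simp only []
    calc τ * x ^ (σ - 1) * (σ * Real.log x + 1)
        = τ * (x ^ (σ - 1) * (σ * Real.log x + 1)) := by ring
      _ ≤ τ * (y ^ (σ - 1) * (σ * Real.log y + 1)) := by
          exact mul_le_mul_of_nonneg_left this hτ.le
      _ = τ * y ^ (σ - 1) * (σ * Real.log y + 1) := by ring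
  have hc1 : (p:ℝ)/2 ≤ c := le_trans (by linarith) hc.1.le
  have hhalf1 : (1:ℝ) ≤ (p:ℝ)/2 := by linarith
  have hc2 : c ≤ (p:ℝ) := hc.2.le
  have hlow : φ ((p:ℝ)/2) ≤ φ c := mono _ _ hhalf1 hc1
  have hhigh : φ c ≤ φ (p:ℝ) := mono _ _ (le_trans hhalf1 hc1) hc2
  -- rewrite the endpoint values
  have hlogp : Real.log (Real.exp 1 * (p : ℝ) ^ σ) = σ * Real.log (p:ℝ) + 1 := by
    rw [Real.log_mul (Real.exp_pos 1).ne' (Real.rpow_pos_of_pos hppos σ).ne',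
      Real.log_exp, Real.log_rpow hppos]
    ring
  have hlog2 : Real.log (Real.exp 1 * (p : ℝ) ^ σ / (2:ℝ) ^ σ)
      = σ * Real.log ((p:ℝ)/2) + 1 := by
    rw [Real.log_div (by positivity) (Real.rpow_pos_of_pos two_pos σ).ne',
      Real.log_mul (Real.exp_pos 1).ne' (Real.rpow_pos_of_pos hppos σ).ne',
      Real.log_exp, Real.log_rpow hppos, Real.log_rpow two_pos,
      Real.log_div hppos.ne' two_ne_zero]
    ring
  have hhalfpow : ((p:ℝ)/2) ^ (σ - 1) = (p:ℝ) ^ (σ - 1) / (2:ℝ) ^ (σ - 1) :=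
    Real.div_rpow hppos.le two_pos.le _
  constructor
  · rw [hcval, hlog2]
    calc τ * (p:ℝ) ^ (σ-1) / (2:ℝ) ^ (σ-1) * (σ * Real.log ((p:ℝ)/2) + 1)
        = τ * (((p:ℝ)/2) ^ (σ-1)) * (σ * Real.log ((p:ℝ)/2) + 1) := by
          rw [hhalfpow]; ring
      _ ≤ φ c := hlow
  · rw [hcval, hlogp]
    exact hhigh
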